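/- The unique quasi-stationary distribution of the number of 'yes' opinions in the 2-opinion discrete-time voter model on the complete graph K_n (n ≥ 3) is the uniform distribution on {1, 2, ..., n-1}, with corresponding eigenvalue λ = 1 - 2/(n(n-1)). -/

import Mathlib

open Finset
private lemma qsd_shift_up (n : ℕ) (hn : 2 ≤ n) (g : ℕ → ℝ) (h1 : g 1 = 0) (h2 : g n = 0) :
    ∑ k ∈ Finset.Icc 1 (n - 1), g (k + 1) = ∑ k ∈ Finset.Icc 1 (n - 1), g k := by
  obtain ⟨m, rfl⟩ : ∃ m, n = m + 2 := ⟨n - 2, by omega⟩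
  have hI : Finset.Icc 1 (m + 2 - 1) = Finset.Ico 1 (m + 2) := by
    rw [show m + 2 - 1 = m + 1 from rfl, ← Finset.Ico_add_one_right_eq_Icc]; rfl
  rw [hI, Finset.sum_Ico_eq_sum_range, Finset.sum_Ico_eq_sum_range]
  rw [show m + 2 - 1 = m + 1 from rfl, Finset.sum_range_succ, Finset.sum_range_succ']
  have e : ∀ i : ℕ, (1 : ℕ) + i + 1 = 1 + (i + 1) := fun i => by omega
  simp only [e]
  rw [show (1 : ℕ) + (m + 1) = m + 2 from by omega, h2, show (1 : ℕ) + 0 = 1 from rfl, h1]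
private lemma qsd_shift_down (n : ℕ) (hn : 2 ≤ n) (g : ℕ → ℝ) (h1 : g 0 = 0)
    (h2 : g (n - 1) = 0) :
    ∑ k ∈ Finset.Icc 1 (n - 1), g (k - 1) = ∑ k ∈ Finset.Icc 1 (n - 1), g k := by
  obtain ⟨m, rfl⟩ : ∃ m, n = m + 2 := ⟨n - 2, by omega⟩
  have hI : Finset.Icc 1 (m + 2 - 1) = Finset.Ico 1 (m + 2) := by
    rw [show m + 2 - 1 = m + 1 from rfl, ← Finset.Ico_add_one_right_eq_Icc]; rfl
  rw [hI, Finset.sum_Ico_eq_sum_range, Finset.sum_Ico_eq_sum_range]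
  rw [show m + 2 - 1 = m + 1 from rfl, Finset.sum_range_succ', Finset.sum_range_succ]
  have e : ∀ i : ℕ, (1 : ℕ) + (i + 1) - 1 = 1 + i := fun i => by omega
  simp only [e]
  rw [show (1 : ℕ) + 0 - 1 = 0 from rfl, h1, show (1 : ℕ) + m = m + 1 from by omega]
  rw [show g (m + 1) = 0 from h2]

/-- The unique QSD of the number of 'yes' opinions in the 2-opinion voter model on the
complete graph `K_n` (`n ≥ 3`) is uniform on `{1,…,n-1}`, with eigenvalue
`λ = 1 - 2/(n(n-1))`: any probability left eigenvector `ν` of the sub-transition matrix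
with a positive eigenvalue `l` equals the uniform distribution, and `l = 1 - 2/(n(n-1))`. -/
theorem complete_graph_qsd_uniform (n : ℕ) (hn : 3 ≤ n)
    (ν : ℕ → ℝ) (hν0 : ∀ k, 0 ≤ ν k)
    (hbd0 : ν 0 = 0) (hbdn : ∀ k, n ≤ k → ν k = 0)
    (hsum : ∑ k ∈ Finset.Icc 1 (n - 1), ν k = 1)
    (l : ℝ) (hl : 0 < l)
    (heig : ∀ k : ℕ, 1 ≤ k → k ≤ n - 1 →
      l * ν k = ν k * (((k : ℝ) * ((k : ℝ) - 1) + ((n : ℝ) - k) * ((n : ℝ) - k - 1))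
          / ((n : ℝ) * ((n : ℝ) - 1)))
        + ν (k + 1) * ((((k : ℝ) + 1) * ((n : ℝ) - k - 1)) / ((n : ℝ) * ((n : ℝ) - 1)))
        + ν (k - 1) * ((((n : ℝ) - k + 1) * ((k : ℝ) - 1)) / ((n : ℝ) * ((n : ℝ) - 1)))) :
    (∀ k : ℕ, 1 ≤ k → k ≤ n - 1 → ν k = 1 / ((n : ℝ) - 1)) ∧
    l = 1 - 2 / ((n : ℝ) * ((n : ℝ) - 1)) := by
  have hnR : (3 : ℝ) ≤ (n : ℝ) := by exact_mod_cast hn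
  set N : ℝ := (n : ℝ) * ((n : ℝ) - 1) with hNdef
  have hNpos : (0 : ℝ) < N := by rw [hNdef]; nlinarith
  have hNne : N ≠ 0 := ne_of_gt hNpos
  -- cleared-denominator form of the eigen-equation
  have heig' : ∀ k : ℕ, 1 ≤ k → k ≤ n - 1 →
      N * (l * ν k) = ν k * ((k : ℝ) * ((k : ℝ) - 1) + ((n : ℝ) - k) * ((n : ℝ) - k - 1))
        + ν (k + 1) * (((k : ℝ) + 1) * ((n : ℝ) - k - 1))
        + ν (k - 1) * (((n : ℝ) - k + 1) * ((k : ℝ) - 1)) := by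
    intro k h1 h2
    rw [heig k h1 h2]
    field_simp
  -- the weighted mass A = ∑ ν k * k(n-k)
  set A : ℝ := ∑ k ∈ Finset.Icc 1 (n - 1), ν k * ((k : ℝ) * ((n : ℝ) - k)) with hAdef
  have hA1 : (1 : ℝ) ≤ A := by
    calc (1 : ℝ) = ∑ k ∈ Finset.Icc 1 (n - 1), ν k := hsum.symm
    _ ≤ A := by
      rw [hAdef]
      apply Finset.sum_le_sum
      intro k hk
      simp only [Finset.mem_Icc] at hk
      have hk1 : (1 : ℝ) ≤ (k : ℝ) := by exact_mod_cast hk.1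
      have hk2 : (k : ℝ) ≤ (n : ℝ) - 1 := by
        have h := hk.2
        have : (k : ℝ) ≤ ((n - 1 : ℕ) : ℝ) := by exact_mod_cast h
        rwa [Nat.cast_sub (by omega), Nat.cast_one] at this
      have huk : (1 : ℝ) ≤ (k : ℝ) * ((n : ℝ) - k) := by nlinarith
      nlinarith [hν0 k, huk]
  have hApos : (0 : ℝ) < A := lt_of_lt_of_le one_pos hA1
  -- shift functions
  set g : ℕ → ℝ := fun j => ν j * ((j : ℝ) * ((n : ℝ) - j)) * (((j : ℝ) - 1) * ((n : ℝ) - j + 1))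
    with hgdef
  set h : ℕ → ℝ := fun j => ν j * ((j : ℝ) * ((n : ℝ) - j)) * (((j : ℝ) + 1) * ((n : ℝ) - j - 1))
    with hhdef
  have hg1 : g 1 = 0 := by simp [hgdef]
  have hgn : g n = 0 := by simp [hhdef, hgdef]
  have hh0 : h 0 = 0 := by simp [hhdef]
  have hhn : h (n - 1) = 0 := by
    have hc : ((n - 1 : ℕ) : ℝ) = (n : ℝ) - 1 := by
      rw [Nat.cast_sub (by omega), Nat.cast_one]
    rw [hhdef]
    simp only [hc]
    have : (n : ℝ) - ((n : ℝ) - 1) - 1 = 0 := by ring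
    rw [this]
    ring
  -- key identity: N * l * A = (N - 2) * A
  have e1 : N * l * A = ∑ k ∈ Finset.Icc 1 (n - 1),
      (ν k * ((k : ℝ) * ((k : ℝ) - 1) + ((n : ℝ) - k) * ((n : ℝ) - k - 1))
        * ((k : ℝ) * ((n : ℝ) - k)) + g (k + 1) + h (k - 1)) := by
    rw [hAdef, Finset.mul_sum]
    apply Finset.sum_congr rfl
    intro k hk
    simp only [Finset.mem_Icc] at hk
    have hrec := heig' k hk.1 hk.2
    have hc : ((k - 1 : ℕ) : ℝ) = (k : ℝ) - 1 := by
      rw [Nat.cast_sub hk.1, Nat.cast_one]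
    calc N * l * (ν k * ((k : ℝ) * ((n : ℝ) - k)))
        = (N * (l * ν k)) * ((k : ℝ) * ((n : ℝ) - k)) := by ring
      _ = _ := by
          rw [hrec, hgdef, hhdef]
          simp only [hc]
          push_cast
          ring
  have e2 : N * l * A = (N - 2) * A := by
    rw [e1]
    rw [Finset.sum_add_distrib, Finset.sum_add_distrib]
    rw [qsd_shift_up n (by omega) g hg1 hgn, qsd_shift_down n (by omega) h hh0 hhn]
    rw [hAdef, Finset.mul_sum, ← Finset.sum_add_distrib, ← Finset.sum_add_distrib]
    apply Finset.sum_congr rfl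
    intro k hk
    rw [hgdef, hhdef, hNdef]
    ring
  have hNl : N * l = N - 2 := by
    have h0 : (N * l - (N - 2)) * A = 0 := by linarith [e2]
    rcases mul_eq_zero.mp h0 with h | h
    · linarith
    · exact absurd h (ne_of_gt hApos)
  have hl2 : l = 1 - 2 / N := by
    field_simp
    linarith [hNl]
  -- step 2: ν is constant on 1..n-1
  have huniv : ∀ k : ℕ, 1 ≤ k → k ≤ n - 1 → ν k = ν 1 := by
    intro k
    induction k using Nat.strong_induction_on with
    | _ k IH =>
      intro hk1 hk2
      rcases Nat.lt_or_ge k 2 with hk | hk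
      · have : k = 1 := by omega
        rw [this]
      · obtain ⟨m, rfl⟩ : ∃ m, k = m + 1 := ⟨k - 1, by omega⟩
        have hm1 : 1 ≤ m := by omega
        have hm2 : m ≤ n - 2 := by omega
        have hrec := heig' m hm1 (by omega)
        have hmR : (1 : ℝ) ≤ (m : ℝ) := by exact_mod_cast hm1
        have hmR2 : (m : ℝ) ≤ (n : ℝ) - 2 := by
          have : (m : ℝ) ≤ ((n - 2 : ℕ) : ℝ) := by exact_mod_cast hm2
          rwa [Nat.cast_sub (by omega), Nat.cast_ofNat] at this
        have hνm : ν m = ν 1 := IH m (by omega) hm1 (by omega)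
        have hterm : ν (m - 1) * (((n : ℝ) - m + 1) * ((m : ℝ) - 1))
            = ν 1 * (((n : ℝ) - m + 1) * ((m : ℝ) - 1)) := by
          rcases Nat.lt_or_ge m 2 with hm | hm
          · have : m = 1 := by omega
            subst this
            norm_num
          · have := IH (m - 1) (by omega) (by omega) (by omega)
            rw [this]
        rw [hνm, hterm] at hrec
        have hB : (0 : ℝ) < ((m : ℝ) + 1) * ((n : ℝ) - m - 1) := by nlinarith
        have hid : N - 2 - ((m : ℝ) * ((m : ℝ) - 1) + ((n : ℝ) - m) * ((n : ℝ) - m - 1))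
            - (((n : ℝ) - m + 1) * ((m : ℝ) - 1)) = ((m : ℝ) + 1) * ((n : ℝ) - m - 1) := by
          rw [hNdef]; ring
        have hfin : ν (m + 1) * (((m : ℝ) + 1) * ((n : ℝ) - m - 1))
            = ν 1 * (((m : ℝ) + 1) * ((n : ℝ) - m - 1)) := by
          linear_combination (-1 : ℝ) * hrec + ν 1 * hNl + ν 1 * hid
        exact mul_right_cancel₀ (ne_of_gt hB) hfin
  -- step 3: normalization
  have hcard : (Finset.Icc 1 (n - 1)).card = n - 1 := by
    rw [Nat.card_Icc]; omega
  have hν1 : ν 1 = 1 / ((n : ℝ) - 1) := by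
    have hs : ∑ k ∈ Finset.Icc 1 (n - 1), ν k = ∑ k ∈ Finset.Icc 1 (n - 1), ν 1 := by
      apply Finset.sum_congr rfl
      intro k hk
      simp only [Finset.mem_Icc] at hk
      exact huniv k hk.1 hk.2
    rw [hs, Finset.sum_const, hcard, nsmul_eq_mul] at hsum
    have hc : ((n - 1 : ℕ) : ℝ) = (n : ℝ) - 1 := by
      rw [Nat.cast_sub (by omega), Nat.cast_one]
    rw [hc] at hsum
    have hne : (n : ℝ) - 1 ≠ 0 := by nlinarith
    field_simp
    linarith [hsum]
  refine ⟨fun k h1 h2 => (huniv k h1 h2).trans hν1, ?_⟩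
  rw [hl2, hNdef]
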